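/- Let X_t be a stable VAR(p) process with companion matrix 𝔸 (ρ(𝔸) < 1), innovation covariance Σ_ε, and lag-0 stacked autocovariance Γ^{(st)}(0). Then the spectral-norm bound ‖Γ^{(st)}(0)^{-1}‖₂ ≤ (1 + Σ_{s=1}^p ‖A_s‖₂)² · ‖Σ_ε^{-1}‖₂ holds, provided Σ_ε is positive definite. -/

import Mathlib

open Finset

/-- Operator norm induced by the Euclidean (2-)norm (spectral norm). -/
noncomputable def opNorm2 {m : Type*} [Fintype m] (A : Matrix m m ℝ) : ℝ :=
  sSup {y : ℝ | ∃ x : m → ℝ, Real.sqrt (∑ j, (x j) ^ 2) = 1 ∧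
    y = Real.sqrt (∑ i, (A.mulVec x i) ^ 2)}

/-- The `dp × dp` companion matrix of a VAR(p) model. -/
def companion {p d : ℕ} (A : Fin p → Matrix (Fin d) (Fin d) ℝ) :
    Matrix (Fin p × Fin d) (Fin p × Fin d) ℝ := fun x y =>
  if x.1.val = 0 then A y.1 x.2 y.2
  else if x.1.val = y.1.val + 1 ∧ x.2 = y.2 then 1 else 0

/-- The stacked innovation covariance `Σ_U = 𝔼 Σ_ε 𝔼ᵀ` (nonzero only in the
top-left `d × d` block). -/
def stackedSigma {p d : ℕ} (Sε : Matrix (Fin d) (Fin d) ℝ) :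
    Matrix (Fin p × Fin d) (Fin p × Fin d) ℝ := fun x y =>
  if x.1.val = 0 ∧ y.1.val = 0 then Sε x.2 y.2 else 0

open Matrix
section EN
variable {m : Type*} [Fintype m]

noncomputable def en (x : m → ℝ) : ℝ := Real.sqrt (∑ i, x i ^ 2)

lemma en_nonneg (x : m → ℝ) : 0 ≤ en x := Real.sqrt_nonneg _

lemma sq_sum_nonneg (x : m → ℝ) : 0 ≤ ∑ i, x i ^ 2 :=
  Finset.sum_nonneg fun _ _ => sq_nonneg _

lemma en_sq (x : m → ℝ) : en x ^ 2 = ∑ i, x i ^ 2 := Real.sq_sqrt (sq_sum_nonneg x)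

lemma en_zero : en (0 : m → ℝ) = 0 := by simp [en]

lemma en_eq_zero_iff {x : m → ℝ} : en x = 0 ↔ x = 0 := by
  constructor
  · intro h
    have h2 : ∑ i, x i ^ 2 = 0 := by
      have h3 := en_sq x
      rw [h] at h3
      simpa using h3.symm
    funext i
    have h4 := (Finset.sum_eq_zero_iff_of_nonneg
      (fun i _ => sq_nonneg (x i))).mp h2 i (Finset.mem_univ i)
    exact (pow_eq_zero_iff two_ne_zero).mp h4
  · rintro rfl; exact en_zero

lemma en_neg (x : m → ℝ) : en (-x) = en x := by simp [en]

lemma en_smul (c : ℝ) (x : m → ℝ) : en (c • x) = |c| * en x := by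
  unfold en
  have h : ∑ i, (c • x) i ^ 2 = c ^ 2 * ∑ i, x i ^ 2 := by
    rw [Finset.mul_sum]
    exact Finset.sum_congr rfl fun i _ => by simp [mul_pow]
  rw [h, Real.sqrt_mul (sq_nonneg c), Real.sqrt_sq_eq_abs]

lemma dot_le_en_mul_en (x y : m → ℝ) : x ⬝ᵥ y ≤ en x * en y := by
  have h1 : (∑ i, x i * y i) ^ 2 ≤ (∑ i, x i ^ 2) * ∑ i, y i ^ 2 :=
    Finset.sum_mul_sq_le_sq_mul_sq _ _ _
  calc x ⬝ᵥ y ≤ |∑ i, x i * y i| := le_abs_self _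
    _ = Real.sqrt ((∑ i, x i * y i) ^ 2) := (Real.sqrt_sq_eq_abs _).symm
    _ ≤ Real.sqrt ((∑ i, x i ^ 2) * ∑ i, y i ^ 2) := Real.sqrt_le_sqrt h1
    _ = en x * en y := Real.sqrt_mul (sq_sum_nonneg x) _

lemma en_add_le (x y : m → ℝ) : en (x + y) ≤ en x + en y := by
  have h : ∑ i, (x i + y i) ^ 2 ≤ (en x + en y) ^ 2 := by
    have hd := dot_le_en_mul_en x y
    have hd' : ∑ i, x i * y i ≤ en x * en y := hd
    have e1 : ∑ i, (x i + y i) ^ 2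
        = (∑ i, x i ^ 2) + 2 * (∑ i, x i * y i) + ∑ i, y i ^ 2 := by
      rw [Finset.mul_sum, ← Finset.sum_add_distrib, ← Finset.sum_add_distrib]
      exact Finset.sum_congr rfl fun i _ => by ring
    rw [e1]
    have e2 := en_sq x
    have e3 := en_sq y
    nlinarith [en_nonneg x, en_nonneg y]
  calc en (x + y) = Real.sqrt (∑ i, (x i + y i) ^ 2) := rfl
    _ ≤ Real.sqrt ((en x + en y) ^ 2) := Real.sqrt_le_sqrt h
    _ = |en x + en y| := Real.sqrt_sq_eq_abs _
    _ = en x + en y := abs_of_nonneg (add_nonneg (en_nonneg x) (en_nonneg y))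

lemma en_sum_le {ι : Type*} (s : Finset ι) (f : ι → m → ℝ) :
    en (∑ r ∈ s, f r) ≤ ∑ r ∈ s, en (f r) := by
  classical
  induction s using Finset.induction_on with
  | empty => simp [en_zero]
  | insert _ _ h ih =>
    rw [Finset.sum_insert h, Finset.sum_insert h]
    exact (en_add_le _ _).trans (add_le_add_right ih _)

lemma opNorm2_nonneg (M : Matrix m m ℝ) : 0 ≤ opNorm2 M :=
  Real.sSup_nonneg fun y hy => by
    obtain ⟨x, _, rfl⟩ := hy; exact Real.sqrt_nonneg _

lemma opNorm2_bddAbove (M : Matrix m m ℝ) :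
    BddAbove {y : ℝ | ∃ x : m → ℝ, Real.sqrt (∑ j, (x j) ^ 2) = 1 ∧
      y = Real.sqrt (∑ i, (M.mulVec x i) ^ 2)} := by
  refine ⟨Real.sqrt (∑ i, ∑ j, M i j ^ 2), ?_⟩
  rintro y ⟨x, hx, rfl⟩
  have hx1 : ∑ j, x j ^ 2 = 1 := Real.sqrt_eq_one.mp hx
  apply Real.sqrt_le_sqrt
  apply Finset.sum_le_sum
  intro i _
  have h2 : M.mulVec x i = ∑ j, M i j * x j := rfl
  calc M.mulVec x i ^ 2 = (∑ j, M i j * x j) ^ 2 := by rw [h2]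
    _ ≤ (∑ j, M i j ^ 2) * ∑ j, x j ^ 2 := Finset.sum_mul_sq_le_sq_mul_sq _ _ _
    _ = ∑ j, M i j ^ 2 := by rw [hx1, mul_one]

lemma en_mulVec_le (M : Matrix m m ℝ) (x : m → ℝ) :
    en (M.mulVec x) ≤ opNorm2 M * en x := by
  rcases eq_or_ne (en x) 0 with h | h
  · have hx0 : x = 0 := en_eq_zero_iff.mp h
    subst hx0
    simp [Matrix.mulVec_zero, en_zero]
  · have hpos : 0 < en x := lt_of_le_of_ne (en_nonneg x) (Ne.symm h)
    have hx' : en ((en x)⁻¹ • x) = 1 := by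
      rw [en_smul, abs_of_nonneg (inv_nonneg.mpr hpos.le), inv_mul_cancel₀ h]
    have hmem : en (M.mulVec ((en x)⁻¹ • x)) ∈ {y : ℝ | ∃ x' : m → ℝ,
        Real.sqrt (∑ j, (x' j) ^ 2) = 1 ∧
        y = Real.sqrt (∑ i, (M.mulVec x' i) ^ 2)} := ⟨(en x)⁻¹ • x, hx', rfl⟩
    have hle := le_csSup (opNorm2_bddAbove M) hmem
    rw [Matrix.mulVec_smul, en_smul, abs_of_nonneg (inv_nonneg.mpr hpos.le)] at hle
    calc en (M.mulVec x) = en x * ((en x)⁻¹ * en (M.mulVec x)) := by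
          field_simp
      _ ≤ en x * opNorm2 M := mul_le_mul_of_nonneg_left hle hpos.le
      _ = opNorm2 M * en x := mul_comm _ _

lemma en_transpose_mulVec_le (M : Matrix m m ℝ) (x : m → ℝ) :
    en (M.transpose.mulVec x) ≤ opNorm2 M * en x := by
  set z := M.transpose.mulVec x with hz
  rcases eq_or_ne (en z) 0 with h | h
  · rw [h]; exact mul_nonneg (opNorm2_nonneg M) (en_nonneg x)
  · have hzpos : 0 < en z := lt_of_le_of_ne (en_nonneg z) (Ne.symm h)
    have h1 : en z ^ 2 = z ⬝ᵥ z := by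
      rw [en_sq]
      simp [dotProduct, sq]
    have h2 : z ⬝ᵥ z = M.mulVec z ⬝ᵥ x := by
      conv_lhs => rw [hz, Matrix.dotProduct_mulVec, Matrix.vecMul_transpose]
    have h3 : M.mulVec z ⬝ᵥ x ≤ (opNorm2 M * en z) * en x := by
      calc M.mulVec z ⬝ᵥ x ≤ en (M.mulVec z) * en x := dot_le_en_mul_en _ _
        _ ≤ (opNorm2 M * en z) * en x :=
            mul_le_mul_of_nonneg_right (en_mulVec_le M z) (en_nonneg x)
    have h4 : en z * en z ≤ (opNorm2 M * en x) * en z := by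
      have := h1 ▸ (h2 ▸ h3)
      nlinarith [this]
    exact le_of_mul_le_mul_right (by linarith [h4]) hzpos

end EN

section PSD
variable {m : Type*} [Fintype m]

lemma psd_quad_nonneg {M : Matrix m m ℝ} (h : M.PosDef) (y : m → ℝ) :
    0 ≤ y ⬝ᵥ M.mulVec y := by
  rcases eq_or_ne y 0 with rfl | hy
  · simp
  · have h2 := (h.dotProduct_mulVec_pos hy).le
    have hst : star y = y := funext fun i => star_trivial _
    rwa [hst] at h2

lemma psd_dot_symm {M : Matrix m m ℝ} (h : M.PosDef) (x z : m → ℝ) :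
    x ⬝ᵥ M.mulVec z = z ⬝ᵥ M.mulVec x := by
  have hM : M.transpose = M := by
    have h1 := h.1.eq
    rwa [Matrix.conjTranspose_eq_transpose_of_trivial] at h1
  calc x ⬝ᵥ M.mulVec z = Matrix.vecMul x M ⬝ᵥ z := Matrix.dotProduct_mulVec _ _ _
    _ = M.transpose.mulVec x ⬝ᵥ z := by rw [Matrix.mulVec_transpose]
    _ = M.mulVec x ⬝ᵥ z := by rw [hM]
    _ = z ⬝ᵥ M.mulVec x := dotProduct_comm _ _

lemma psd_cauchy_schwarz {M : Matrix m m ℝ} (h : M.PosDef) (x z : m → ℝ) :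
    (x ⬝ᵥ M.mulVec z) ^ 2 ≤ (x ⬝ᵥ M.mulVec x) * (z ⬝ᵥ M.mulVec z) := by
  have hquad : ∀ t : ℝ, 0 ≤ (z ⬝ᵥ M.mulVec z) * (t * t)
      + (2 * (x ⬝ᵥ M.mulVec z)) * t + x ⬝ᵥ M.mulVec x := by
    intro t
    have h0 := psd_quad_nonneg h (x + t • z)
    have he : (x + t • z) ⬝ᵥ M.mulVec (x + t • z)
        = (z ⬝ᵥ M.mulVec z) * (t * t) + (2 * (x ⬝ᵥ M.mulVec z)) * t
          + x ⬝ᵥ M.mulVec x := by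
      rw [Matrix.mulVec_add, Matrix.mulVec_smul]
      rw [add_dotProduct, smul_dotProduct]
      rw [dotProduct_add, dotProduct_add]
      rw [dotProduct_smul, dotProduct_smul]
      have hsymm := psd_dot_symm h x z
      simp only [smul_eq_mul]
      linear_combination (-t) * hsymm
    linarith [he ▸ h0]
  have hd := discrim_le_zero hquad
  unfold discrim at hd
  nlinarith [hd]

lemma posdef_quad_lower {M : Matrix m m ℝ} [DecidableEq m] (hpd : M.PosDef)
    (u : m → ℝ) : en u ^ 2 ≤ opNorm2 M⁻¹ * (u ⬝ᵥ M.mulVec u) := by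
  have hdet : IsUnit M.det := isUnit_iff_ne_zero.mpr (ne_of_gt hpd.det_pos)
  set y := M⁻¹.mulVec u with hy
  have hSy : M.mulVec y = u := by
    rw [hy, Matrix.mulVec_mulVec, Matrix.mul_nonsing_inv _ hdet, Matrix.one_mulVec]
  have h1 : en u ^ 2 = u ⬝ᵥ u := by rw [en_sq]; simp [dotProduct, sq]
  have h2 : u ⬝ᵥ u = u ⬝ᵥ M.mulVec y := by rw [hSy]
  have hcs := psd_cauchy_schwarz hpd u y
  have h3 : y ⬝ᵥ M.mulVec y ≤ (opNorm2 M⁻¹ * en u) * en u := by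
    calc y ⬝ᵥ M.mulVec y = y ⬝ᵥ u := by rw [hSy]
      _ ≤ en y * en u := dot_le_en_mul_en _ _
      _ ≤ (opNorm2 M⁻¹ * en u) * en u :=
          mul_le_mul_of_nonneg_right (en_mulVec_le M⁻¹ u) (en_nonneg u)
  have hQ0 : 0 ≤ u ⬝ᵥ M.mulVec u := psd_quad_nonneg hpd u
  have hE0 : 0 ≤ en u := en_nonneg u
  have hK0 : 0 ≤ opNorm2 M⁻¹ := opNorm2_nonneg _
  rcases eq_or_ne (en u) 0 with h0 | h0
  · rw [h0]
    simpa using mul_nonneg hK0 hQ0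
  · have hpos : 0 < en u := lt_of_le_of_ne hE0 (Ne.symm h0)
    -- (en u ^2)^2 = (u ⬝ᵥ M y)^2 ≤ Q * (y M y) ≤ Q * (K * en u * en u)
    have key : (en u ^ 2) ^ 2 ≤ (u ⬝ᵥ M.mulVec u) * ((opNorm2 M⁻¹ * en u) * en u) := by
      calc (en u ^ 2) ^ 2 = (u ⬝ᵥ M.mulVec y) ^ 2 := by rw [h1, h2]
        _ ≤ (u ⬝ᵥ M.mulVec u) * (y ⬝ᵥ M.mulVec y) := hcs
        _ ≤ (u ⬝ᵥ M.mulVec u) * ((opNorm2 M⁻¹ * en u) * en u) :=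
            mul_le_mul_of_nonneg_left h3 hQ0
    have hE2 : 0 < en u ^ 2 := pow_pos hpos 2
    nlinarith [key, hE2]

end PSD

lemma weighted_cs {ι : Type*} (s : Finset ι) (c x : ι → ℝ) (hc : ∀ i ∈ s, 0 ≤ c i) :
    (∑ i ∈ s, c i * x i) ^ 2 ≤ (∑ i ∈ s, c i) * ∑ i ∈ s, c i * x i ^ 2 := by
  have h1 : ∑ i ∈ s, c i * x i = ∑ i ∈ s, Real.sqrt (c i) * (Real.sqrt (c i) * x i) :=
    Finset.sum_congr rfl fun i hi => by
      rw [← mul_assoc, Real.mul_self_sqrt (hc i hi)]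
  have h2 : ∑ i ∈ s, c i = ∑ i ∈ s, Real.sqrt (c i) ^ 2 :=
    Finset.sum_congr rfl fun i hi => (Real.sq_sqrt (hc i hi)).symm
  have h3 : ∑ i ∈ s, c i * x i ^ 2 = ∑ i ∈ s, (Real.sqrt (c i) * x i) ^ 2 :=
    Finset.sum_congr rfl fun i hi => by rw [mul_pow, Real.sq_sqrt (hc i hi)]
  rw [h1, h2, h3]
  exact Finset.sum_mul_sq_le_sq_mul_sq s _ _

/-- totalized coefficient matrices -/
def compB {p d : ℕ} (A : Fin p → Matrix (Fin d) (Fin d) ℝ) (s : ℕ) :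
    Matrix (Fin d) (Fin d) ℝ :=
  if h : s < p then A ⟨s, h⟩ else 0

lemma compB_fin {p d : ℕ} (A : Fin p → Matrix (Fin d) (Fin d) ℝ) (k : Fin p) :
    compB A (k : ℕ) = A k := by
  rw [compB, dif_pos k.isLt]

lemma companion_transpose_mulVec {p d : ℕ} (hp : 0 < p)
    (A : Fin p → Matrix (Fin d) (Fin d) ℝ) (x : Fin p × Fin d → ℝ)
    (k : Fin p) (i : Fin d) :
    (companion A).transpose.mulVec x (k, i) =
      (∑ j, A k j i * x (⟨0, hp⟩, j)) +
      (if h : (k : ℕ) + 1 < p then x (⟨(k : ℕ) + 1, h⟩, i) else 0) := by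
  classical
  have e0 : (companion A).transpose.mulVec x (k, i)
      = ∑ l : Fin p, ∑ j : Fin d, companion A (l, j) (k, i) * x (l, j) := by
    simp [Matrix.mulVec, dotProduct, Matrix.transpose_apply,
      Fintype.sum_prod_type]
  rw [e0]
  have hsplit : ∀ (l : Fin p) (j : Fin d),
      companion A (l, j) (k, i) * x (l, j)
        = (if (l : ℕ) = 0 then A k j i * x (l, j) else 0)
          + (if (l : ℕ) = (k : ℕ) + 1 ∧ j = i ∧ (l : ℕ) ≠ 0 then x (l, j) else 0) := by
    intro l j
    show (if (l : ℕ) = 0 then A k j i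
        else if (l : ℕ) = (k : ℕ) + 1 ∧ j = i then (1 : ℝ) else 0) * x (l, j) = _
    rcases eq_or_ne (l : ℕ) 0 with h0 | h0
    · simp [h0]
    · rw [if_neg h0]
      by_cases h1 : (l : ℕ) = (k : ℕ) + 1 ∧ j = i
      · rw [if_pos h1, one_mul, if_neg h0, if_pos ⟨h1.1, h1.2, h0⟩, zero_add]
      · have h2 : ¬((l : ℕ) = (k : ℕ) + 1 ∧ j = i ∧ (l : ℕ) ≠ 0) := by
          rintro ⟨ha, hb, _⟩; exact h1 ⟨ha, hb⟩
        rw [if_neg h1, zero_mul, if_neg h0, if_neg h2, zero_add]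
  rw [Finset.sum_congr rfl fun l _ => Finset.sum_congr rfl fun j _ => hsplit l j]
  have hdistrib : ∑ l : Fin p, ∑ j : Fin d,
      ((if (l : ℕ) = 0 then A k j i * x (l, j) else 0)
        + (if (l : ℕ) = (k : ℕ) + 1 ∧ j = i ∧ (l : ℕ) ≠ 0 then x (l, j) else 0))
      = (∑ l : Fin p, ∑ j : Fin d, (if (l : ℕ) = 0 then A k j i * x (l, j) else 0))
        + ∑ l : Fin p, ∑ j : Fin d,
            (if (l : ℕ) = (k : ℕ) + 1 ∧ j = i ∧ (l : ℕ) ≠ 0 then x (l, j) else 0) := by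
    rw [← Finset.sum_add_distrib]
    exact Finset.sum_congr rfl fun l _ => Finset.sum_add_distrib
  rw [hdistrib]
  have h1 : ∑ l : Fin p, ∑ j : Fin d, (if (l : ℕ) = 0 then A k j i * x (l, j) else 0)
      = ∑ j, A k j i * x (⟨0, hp⟩, j) := by
    rw [Finset.sum_eq_single (⟨0, hp⟩ : Fin p)]
    · simp
    · intro l _ hl
      apply Finset.sum_eq_zero
      intro j _
      rw [if_neg]
      intro hl0
      exact hl (Fin.ext hl0)
    · intro hmem; exact absurd (Finset.mem_univ _) hmem
  have h2 : ∑ l : Fin p, ∑ j : Fin d,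
      (if (l : ℕ) = (k : ℕ) + 1 ∧ j = i ∧ (l : ℕ) ≠ 0 then x (l, j) else 0)
      = if h : (k : ℕ) + 1 < p then x (⟨(k : ℕ) + 1, h⟩, i) else 0 := by
    by_cases h : (k : ℕ) + 1 < p
    · rw [dif_pos h, Finset.sum_eq_single (⟨(k : ℕ) + 1, h⟩ : Fin p)]
      · rw [Finset.sum_eq_single i]
        · rw [if_pos ⟨rfl, rfl, Nat.succ_ne_zero _⟩]
        · intro j _ hj
          rw [if_neg]; rintro ⟨_, hji, _⟩; exact hj hji
        · intro hmem; exact absurd (Finset.mem_univ _) hmem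
      · intro l _ hl
        apply Finset.sum_eq_zero
        intro j _
        rw [if_neg]; rintro ⟨hl1, _, _⟩; exact hl (Fin.ext hl1)
      · intro hmem; exact absurd (Finset.mem_univ _) hmem
    · rw [dif_neg h]
      apply Finset.sum_eq_zero; intro l _
      apply Finset.sum_eq_zero; intro j _
      rw [if_neg]; rintro ⟨hl1, _, _⟩
      exact h (hl1 ▸ l.isLt)
  rw [h1, h2]

lemma companion_unroll {p d : ℕ} (hp : 0 < p)
    (A : Fin p → Matrix (Fin d) (Fin d) ℝ) (v : Fin p × Fin d → ℝ) :
    ∀ (t : ℕ) (k : Fin p) (ht : t + (k : ℕ) < p) (i : Fin d),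
      ((companion A) ^ t).transpose.mulVec v (k, i)
        = v (⟨t + (k : ℕ), ht⟩, i)
          + ∑ r ∈ Finset.range t, ∑ j, compB A ((k : ℕ) + r) j i
              * ((companion A) ^ (t - 1 - r)).transpose.mulVec v (⟨0, hp⟩, j) := by
  intro t
  induction t with
  | zero =>
    intro k ht i
    have hk : (⟨0 + (k : ℕ), ht⟩ : Fin p) = k := Fin.ext (show 0 + (k : ℕ) = (k : ℕ) by omega)
    simp [hk]
  | succ t ih =>
    intro k ht i
    have hstep : ((companion A) ^ (t + 1)).transpose.mulVec v
        = (companion A).transpose.mulVec (((companion A) ^ t).transpose.mulVec v) := by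
      rw [pow_succ, Matrix.transpose_mul, ← Matrix.mulVec_mulVec]
    rw [hstep, companion_transpose_mulVec hp A _ k i]
    have hk1 : (k : ℕ) + 1 < p := by omega
    rw [dif_pos hk1]
    have hih := ih ⟨(k : ℕ) + 1, hk1⟩ (show t + ((k : ℕ) + 1) < p by omega) i
    rw [hih]
    rw [Finset.sum_range_succ']
    have hf0 : ∑ j, compB A ((k : ℕ) + 0) j i
        * ((companion A) ^ (t + 1 - 1 - 0)).transpose.mulVec v (⟨0, hp⟩, j)
        = ∑ j, A k j i * ((companion A) ^ t).transpose.mulVec v (⟨0, hp⟩, j) := by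
      apply Finset.sum_congr rfl
      intro j _
      congr 1
      · congr 1
        rw [show (k : ℕ) + 0 = (k : ℕ) from rfl, compB_fin]
    have hfr : ∀ r, ((⟨(k : ℕ) + 1, hk1⟩ : Fin p) : ℕ) + r = (k : ℕ) + (r + 1) := by
      intro r; simp; omega
    have hsum : ∑ r ∈ Finset.range t, ∑ j,
          compB A ((k : ℕ) + (r + 1)) j i
            * ((companion A) ^ (t + 1 - 1 - (r + 1))).transpose.mulVec v (⟨0, hp⟩, j)
        = ∑ r ∈ Finset.range t, ∑ j,
          compB A ((((⟨(k : ℕ) + 1, hk1⟩ : Fin p)) : ℕ) + r) j i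
            * ((companion A) ^ (t - 1 - r)).transpose.mulVec v (⟨0, hp⟩, j) := by
      apply Finset.sum_congr rfl
      intro r _
      apply Finset.sum_congr rfl
      intro j _
      rw [show (k : ℕ) + (r + 1) = ((⟨(k : ℕ) + 1, hk1⟩ : Fin p) : ℕ) + r from (hfr r).symm,
        show t + 1 - 1 - (r + 1) = t - 1 - r by omega]
    have hv : (⟨t + ((⟨(k : ℕ) + 1, hk1⟩ : Fin p) : ℕ), show t + ((k : ℕ) + 1) < p by omega⟩ : Fin p)
        = (⟨t + 1 + (k : ℕ), ht⟩ : Fin p) := Fin.ext (show t + ((k : ℕ) + 1) = t + 1 + (k : ℕ) by omega)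
    rw [hsum.symm] at *
    -- assemble
    rw [show ((⟨t + ((⟨(k:ℕ)+1, hk1⟩ : Fin p) : ℕ), _⟩ : Fin p)) = (⟨t + 1 + (k : ℕ), ht⟩ : Fin p) from hv]
    rw [hf0]
    ring

lemma stackedSigma_quad {p d : ℕ} (hp : 0 < p) (Sε : Matrix (Fin d) (Fin d) ℝ)
    (x : Fin p × Fin d → ℝ) :
    x ⬝ᵥ (stackedSigma Sε).mulVec x
      = (fun i => x (⟨0, hp⟩, i)) ⬝ᵥ Sε.mulVec (fun i => x (⟨0, hp⟩, i)) := by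
  classical
  have hmv : ∀ (k : Fin p) (i : Fin d), (stackedSigma (p := p) Sε).mulVec x (k, i)
      = if (k : ℕ) = 0 then ∑ j, Sε i j * x (⟨0, hp⟩, j) else 0 := by
    intro k i
    have e0 : (stackedSigma (p := p) Sε).mulVec x (k, i)
        = ∑ l : Fin p, ∑ j : Fin d,
            (if (k : ℕ) = 0 ∧ (l : ℕ) = 0 then Sε i j else 0) * x (l, j) := by
      simp [Matrix.mulVec, dotProduct, stackedSigma, Fintype.sum_prod_type]
    rw [e0]
    by_cases hk : (k : ℕ) = 0
    · rw [if_pos hk, Finset.sum_eq_single (⟨0, hp⟩ : Fin p)]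
      · apply Finset.sum_congr rfl
        intro j _
        rw [if_pos ⟨hk, rfl⟩]
      · intro l _ hl
        apply Finset.sum_eq_zero
        intro j _
        rw [if_neg, zero_mul]
        rintro ⟨_, hl0⟩; exact hl (Fin.ext hl0)
      · intro hmem; exact absurd (Finset.mem_univ _) hmem
    · rw [if_neg hk]
      apply Finset.sum_eq_zero; intro l _
      apply Finset.sum_eq_zero; intro j _
      rw [if_neg, zero_mul]
      rintro ⟨hk0, _⟩; exact hk hk0
  have e1 : x ⬝ᵥ (stackedSigma (p := p) Sε).mulVec x
      = ∑ k : Fin p, ∑ i : Fin d, x (k, i) * (stackedSigma (p := p) Sε).mulVec x (k, i) := by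
    simp [dotProduct, Fintype.sum_prod_type]
  rw [e1]
  rw [Finset.sum_eq_single (⟨0, hp⟩ : Fin p)]
  · apply Finset.sum_congr rfl
    intro i _
    rw [hmv, if_pos rfl]
    rfl
  · intro l _ hl
    apply Finset.sum_eq_zero
    intro i _
    rw [hmv, if_neg, mul_zero]
    intro hl0; exact hl (Fin.ext hl0)
  · intro hmem; exact absurd (Finset.mem_univ _) hmem


/-- for a stable VAR(p) process with positive definite
innovation covariance, the inverse of the lag-zero stacked autocovariance
satisfies `‖Γ^{(st)}(0)⁻¹‖₂ ≤ (1 + Σ_s ‖A_s‖₂)² ‖Σ_ε⁻¹‖₂`. -/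
theorem inv_autocovariance_spectral_bound (p d : ℕ) (hp : 0 < p) (hd : 0 < d)
    (A : Fin p → Matrix (Fin d) (Fin d) ℝ)
    (Sε : Matrix (Fin d) (Fin d) ℝ) (hpd : Sε.PosDef)
    (hstable : ∀ μ ∈ spectrum ℂ ((companion A).map (Complex.ofReal)),
        ‖μ‖ < 1)
    (Γ0 : Matrix (Fin p × Fin d) (Fin p × Fin d) ℝ)
    (hΓ0 : HasSum (fun j : ℕ =>
        companion A ^ j * stackedSigma Sε * (companion A ^ j).transpose) Γ0) :
    opNorm2 Γ0⁻¹ ≤ (1 + ∑ s : Fin p, opNorm2 (A s)) ^ 2 * opNorm2 Sε⁻¹ := by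
  classical
  set α : ℝ := ∑ s : Fin p, opNorm2 (A s) with hα
  have hα0 : 0 ≤ α := Finset.sum_nonneg fun s _ => opNorm2_nonneg _
  set K : ℝ := opNorm2 Sε⁻¹ with hK
  have hK0 : 0 ≤ K := opNorm2_nonneg _
  have hC0 : 0 ≤ (1 + α) ^ 2 * K := mul_nonneg (sq_nonneg _) hK0
  have hBsum : ∑ r ∈ Finset.range p, opNorm2 (compB A r) = α := by
    rw [hα, ← Fin.sum_univ_eq_sum_range (fun r => opNorm2 (compB A r)) p]
    exact Finset.sum_congr rfl fun s _ => by rw [compB_fin]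
  have hBsub : ∀ t, t ≤ p → ∑ r ∈ Finset.range t, opNorm2 (compB A r) ≤ α := by
    intro t htp
    rw [← hBsum]
    exact Finset.sum_le_sum_of_subset_of_nonneg
      (Finset.range_subset_range.mpr htp) (fun r _ _ => opNorm2_nonneg _)
  -- the key quadratic-form lower bound
  have key : ∀ v : Fin p × Fin d → ℝ,
      en v ^ 2 ≤ ((1 + α) ^ 2 * K) * (v ⬝ᵥ Γ0.mulVec v) := by
    intro v
    set w : ℕ → (Fin p × Fin d → ℝ) :=
      fun t => ((companion A ^ t).transpose).mulVec v with hw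
    set u : ℕ → (Fin d → ℝ) := fun t i => w t (⟨0, hp⟩, i) with hu
    set n : ℕ → ℝ := fun t => en (u t) with hn
    have hn0 : ∀ t, 0 ≤ n t := fun t => en_nonneg _
    -- HasSum of quadratic forms
    let L : Matrix (Fin p × Fin d) (Fin p × Fin d) ℝ →ₗ[ℝ] ℝ :=
      { toFun := fun M => v ⬝ᵥ M.mulVec v
        map_add' := fun M N => by
          simp [Matrix.add_mulVec, dotProduct_add]
        map_smul' := fun c M => by
          simp [Matrix.smul_mulVec, dotProduct_smul] }
    have hq : HasSum
        (fun j : ℕ => v ⬝ᵥ (companion A ^ j * stackedSigma Sε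
            * (companion A ^ j).transpose).mulVec v)
        (v ⬝ᵥ Γ0.mulVec v) := by
      have hmap := hΓ0.map L L.continuous_of_finiteDimensional
      simpa [Function.comp_def, L] using hmap
    have hterm : ∀ j : ℕ, v ⬝ᵥ (companion A ^ j * stackedSigma Sε
          * (companion A ^ j).transpose).mulVec v
        = u j ⬝ᵥ Sε.mulVec (u j) := by
      intro j
      have e1 : (companion A ^ j * stackedSigma Sε
            * (companion A ^ j).transpose).mulVec v
          = (companion A ^ j).mulVec ((stackedSigma Sε).mulVec (w j)) := by
        rw [← Matrix.mulVec_mulVec, ← Matrix.mulVec_mulVec, hw]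
      rw [e1, Matrix.dotProduct_mulVec, ← Matrix.mulVec_transpose]
      exact stackedSigma_quad hp Sε (w j)
    have hq' : HasSum (fun j : ℕ => u j ⬝ᵥ Sε.mulVec (u j)) (v ⬝ᵥ Γ0.mulVec v) := by
      simpa only [hterm] using hq
    have hps : ∑ t ∈ Finset.range p, (u t ⬝ᵥ Sε.mulVec (u t)) ≤ v ⬝ᵥ Γ0.mulVec v :=
      sum_le_hasSum _ (fun j _ => psd_quad_nonneg hpd (u j)) hq'
    have hS : ∑ t ∈ Finset.range p, n t ^ 2 ≤ K * (v ⬝ᵥ Γ0.mulVec v) := by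
      calc ∑ t ∈ Finset.range p, n t ^ 2
          ≤ ∑ t ∈ Finset.range p, K * (u t ⬝ᵥ Sε.mulVec (u t)) :=
            Finset.sum_le_sum fun t _ => posdef_quad_lower hpd (u t)
        _ = K * ∑ t ∈ Finset.range p, (u t ⬝ᵥ Sε.mulVec (u t)) := by
            rw [Finset.mul_sum]
        _ ≤ K * (v ⬝ᵥ Γ0.mulVec v) := mul_le_mul_of_nonneg_left hps hK0
    -- block components of v
    set vb : ℕ → (Fin d → ℝ) :=
      fun t i => if h : t < p then v (⟨t, h⟩, i) else 0 with hvb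
    have hvt : ∀ (t : ℕ), t < p →
        vb t = u t - ∑ r ∈ Finset.range t, (compB A r).transpose.mulVec (u (t - 1 - r)) := by
      intro t ht
      funext i
      have hlt : t + ((⟨0, hp⟩ : Fin p) : ℕ) < p := by
        show t + 0 < p; omega
      have hun := companion_unroll hp A v t ⟨0, hp⟩ hlt i
      have hvbi : vb t i = v (⟨t, ht⟩, i) := by rw [hvb]; simp [ht]
      have hfin : (⟨t + ((⟨0, hp⟩ : Fin p) : ℕ), hlt⟩ : Fin p) = (⟨t, ht⟩ : Fin p) :=
        Fin.ext (show t + 0 = t by omega)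
      rw [hfin] at hun
      have hrw : ∀ r ∈ Finset.range t, ∑ j, compB A (((⟨0, hp⟩ : Fin p) : ℕ) + r) j i
            * (companion A ^ (t - 1 - r)).transpose.mulVec v (⟨0, hp⟩, j)
          = ((compB A r).transpose.mulVec (u (t - 1 - r))) i := by
        intro r _
        rw [show ((⟨0, hp⟩ : Fin p) : ℕ) + r = r from by simp]
        rfl
      rw [Finset.sum_congr rfl hrw] at hun
      have hsub : (u t - ∑ r ∈ Finset.range t,
            (compB A r).transpose.mulVec (u (t - 1 - r))) i
          = u t i - ∑ r ∈ Finset.range t,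
              ((compB A r).transpose.mulVec (u (t - 1 - r))) i := by
        simp [Finset.sum_apply]
      rw [hvbi, hsub]
      have hut : u t i = w t (⟨0, hp⟩, i) := rfl
      rw [hut, hw]
      linarith [hun]
    -- triangle inequality
    have hnv : ∀ (t : ℕ), t < p → en (vb t)
        ≤ n t + ∑ r ∈ Finset.range t, opNorm2 (compB A r) * n (t - 1 - r) := by
      intro t ht
      rw [hvt t ht, sub_eq_add_neg]
      refine (en_add_le _ _).trans ?_
      rw [en_neg]
      refine add_le_add_right ?_ _
      refine (en_sum_le _ _).trans ?_
      exact Finset.sum_le_sum fun r _ => en_transpose_mulVec_le _ _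
    -- weighted Cauchy-Schwarz, per block
    have hsq : ∀ (t : ℕ), t < p → en (vb t) ^ 2
        ≤ (1 + α) * (n t ^ 2
            + ∑ r ∈ Finset.range t, opNorm2 (compB A r) * n (t - 1 - r) ^ 2) := by
      intro t ht
      set a : ℕ → ℝ := fun r => if r = 0 then 1 else opNorm2 (compB A (r - 1)) with ha
      set x : ℕ → ℝ := fun r => if r = 0 then n t else n (t - 1 - (r - 1)) with hx
      have ha0 : ∀ r, 0 ≤ a r := by
        intro r
        rw [ha]
        by_cases h : r = 0 <;> simp [h, opNorm2_nonneg]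
      have hax : n t + ∑ r ∈ Finset.range t, opNorm2 (compB A r) * n (t - 1 - r)
          = ∑ r ∈ Finset.range (t + 1), a r * x r := by
        rw [Finset.sum_range_succ']
        have : ∀ r ∈ Finset.range t, a (r + 1) * x (r + 1)
            = opNorm2 (compB A r) * n (t - 1 - r) := by
          intro r _
          rw [ha, hx]
          simp
        rw [Finset.sum_congr rfl this, ha, hx]
        simp [add_comm]
      have haxsq : n t ^ 2 + ∑ r ∈ Finset.range t, opNorm2 (compB A r) * n (t - 1 - r) ^ 2
          = ∑ r ∈ Finset.range (t + 1), a r * x r ^ 2 := by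
        rw [Finset.sum_range_succ']
        have : ∀ r ∈ Finset.range t, a (r + 1) * x (r + 1) ^ 2
            = opNorm2 (compB A r) * n (t - 1 - r) ^ 2 := by
          intro r _
          rw [ha, hx]
          simp
        rw [Finset.sum_congr rfl this, ha, hx]
        simp [add_comm]
      have hasum : ∑ r ∈ Finset.range (t + 1), a r ≤ 1 + α := by
        rw [Finset.sum_range_succ']
        have : ∀ r ∈ Finset.range t, a (r + 1) = opNorm2 (compB A r) := by
          intro r _; rw [ha]; simp
        have ha0' : a 0 = 1 := by simp [ha]
        rw [Finset.sum_congr rfl this, ha0']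
        have := hBsub t (le_of_lt ht)
        linarith
      have h1 : en (vb t) ≤ ∑ r ∈ Finset.range (t + 1), a r * x r := by
        rw [← hax]; exact hnv t ht
      have h2 := weighted_cs (Finset.range (t + 1)) a x (fun r _ => ha0 r)
      have hsum_ax_nonneg : 0 ≤ ∑ r ∈ Finset.range (t + 1), a r * x r ^ 2 :=
        Finset.sum_nonneg fun r _ => mul_nonneg (ha0 r) (sq_nonneg _)
      calc en (vb t) ^ 2 ≤ (∑ r ∈ Finset.range (t + 1), a r * x r) ^ 2 :=
            pow_le_pow_left₀ (en_nonneg _) h1 2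
        _ ≤ (∑ r ∈ Finset.range (t + 1), a r) * ∑ r ∈ Finset.range (t + 1), a r * x r ^ 2 := h2
        _ ≤ (1 + α) * ∑ r ∈ Finset.range (t + 1), a r * x r ^ 2 :=
            mul_le_mul_of_nonneg_right hasum hsum_ax_nonneg
        _ = (1 + α) * (n t ^ 2
              + ∑ r ∈ Finset.range t, opNorm2 (compB A r) * n (t - 1 - r) ^ 2) := by
            rw [haxsq]
    -- summing the block bounds
    have hsum1 : en v ^ 2 = ∑ t ∈ Finset.range p, en (vb t) ^ 2 := by
      rw [en_sq, ← Fin.sum_univ_eq_sum_range (fun t => en (vb t) ^ 2) p,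
        Fintype.sum_prod_type]
      apply Finset.sum_congr rfl
      intro k _
      rw [en_sq]
      apply Finset.sum_congr rfl
      intro i _
      rw [hvb]
      simp [k.isLt]
    -- the double-sum bound
    have hTT : ∑ t ∈ Finset.range p, ∑ r ∈ Finset.range t,
          opNorm2 (compB A r) * n (t - 1 - r) ^ 2
        ≤ α * ∑ t ∈ Finset.range p, n t ^ 2 := by
      have e1 : ∀ t ∈ Finset.range p, ∑ r ∈ Finset.range t,
            opNorm2 (compB A r) * n (t - 1 - r) ^ 2
          = ∑ r ∈ Finset.range p, (if r < t then opNorm2 (compB A r) * n (t - 1 - r) ^ 2 else 0) := by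
        intro t ht
        have hsubset : Finset.range t ⊆ Finset.range p :=
          Finset.range_subset_range.mpr (le_of_lt (Finset.mem_range.mp ht))
        rw [Finset.sum_congr rfl (fun r hr =>
          (if_pos (Finset.mem_range.mp hr)).symm
            : ∀ r ∈ Finset.range t, opNorm2 (compB A r) * n (t - 1 - r) ^ 2
              = if r < t then opNorm2 (compB A r) * n (t - 1 - r) ^ 2 else 0)]
        exact Finset.sum_subset hsubset fun r _ hr => by
          rw [if_neg (fun hc => hr (Finset.mem_range.mpr hc))]
      rw [Finset.sum_congr rfl e1, Finset.sum_comm]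
      have inner : ∀ r ∈ Finset.range p, ∑ t ∈ Finset.range p,
            (if r < t then opNorm2 (compB A r) * n (t - 1 - r) ^ 2 else 0)
          ≤ opNorm2 (compB A r) * ∑ q ∈ Finset.range p, n q ^ 2 := by
        intro r _
        rw [← Finset.sum_filter]
        have hinj : ∀ x ∈ (Finset.range p).filter (fun t => r < t),
            ∀ y ∈ (Finset.range p).filter (fun t => r < t),
            x - 1 - r = y - 1 - r → x = y := by
          intro x hx y hy hxy
          have hx' := (Finset.mem_filter.mp hx).2
          have hy' := (Finset.mem_filter.mp hy).2
          omega
        have himg : ((Finset.range p).filter (fun t => r < t)).image (fun t => t - 1 - r)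
            ⊆ Finset.range p := by
          intro q hq
          obtain ⟨t, htm, rfl⟩ := Finset.mem_image.mp hq
          have := Finset.mem_range.mp (Finset.mem_filter.mp htm).1
          exact Finset.mem_range.mpr (by omega)
        calc ∑ t ∈ (Finset.range p).filter (fun t => r < t),
              opNorm2 (compB A r) * n (t - 1 - r) ^ 2
            = ∑ q ∈ ((Finset.range p).filter (fun t => r < t)).image (fun t => t - 1 - r),
                opNorm2 (compB A r) * n q ^ 2 :=
              (Finset.sum_image (f := fun q => opNorm2 (compB A r) * n q ^ 2)
                (g := fun t => t - 1 - r) hinj).symm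
          _ ≤ ∑ q ∈ Finset.range p, opNorm2 (compB A r) * n q ^ 2 :=
              Finset.sum_le_sum_of_subset_of_nonneg himg
                (fun q _ _ => mul_nonneg (opNorm2_nonneg _) (sq_nonneg _))
          _ = opNorm2 (compB A r) * ∑ q ∈ Finset.range p, n q ^ 2 := by
              rw [Finset.mul_sum]
      calc ∑ r ∈ Finset.range p, ∑ t ∈ Finset.range p,
            (if r < t then opNorm2 (compB A r) * n (t - 1 - r) ^ 2 else 0)
          ≤ ∑ r ∈ Finset.range p, opNorm2 (compB A r) * ∑ q ∈ Finset.range p, n q ^ 2 :=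
            Finset.sum_le_sum inner
        _ = (∑ r ∈ Finset.range p, opNorm2 (compB A r)) * ∑ q ∈ Finset.range p, n q ^ 2 := by
            rw [Finset.sum_mul]
        _ = α * ∑ q ∈ Finset.range p, n q ^ 2 := by rw [hBsum]
    have hSnn : 0 ≤ ∑ t ∈ Finset.range p, n t ^ 2 :=
      Finset.sum_nonneg fun t _ => sq_nonneg _
    calc en v ^ 2 = ∑ t ∈ Finset.range p, en (vb t) ^ 2 := hsum1
      _ ≤ ∑ t ∈ Finset.range p, (1 + α) * (n t ^ 2
            + ∑ r ∈ Finset.range t, opNorm2 (compB A r) * n (t - 1 - r) ^ 2) :=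
          Finset.sum_le_sum fun t ht => hsq t (Finset.mem_range.mp ht)
      _ = (1 + α) * ∑ t ∈ Finset.range p, (n t ^ 2
            + ∑ r ∈ Finset.range t, opNorm2 (compB A r) * n (t - 1 - r) ^ 2) := by
          rw [Finset.mul_sum]
      _ = (1 + α) * ((∑ t ∈ Finset.range p, n t ^ 2)
            + ∑ t ∈ Finset.range p, ∑ r ∈ Finset.range t,
                opNorm2 (compB A r) * n (t - 1 - r) ^ 2) := by
          rw [Finset.sum_add_distrib]
      _ ≤ (1 + α) * ((∑ t ∈ Finset.range p, n t ^ 2)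
            + α * ∑ t ∈ Finset.range p, n t ^ 2) := by
          apply mul_le_mul_of_nonneg_left _ (by linarith)
          linarith [hTT]
      _ = (1 + α) ^ 2 * ∑ t ∈ Finset.range p, n t ^ 2 := by ring
      _ ≤ (1 + α) ^ 2 * (K * (v ⬝ᵥ Γ0.mulVec v)) :=
          mul_le_mul_of_nonneg_left hS (sq_nonneg _)
      _ = ((1 + α) ^ 2 * K) * (v ⬝ᵥ Γ0.mulVec v) := by ring
  -- invertibility of Γ0
  have hdet : IsUnit Γ0.det := by
    rw [isUnit_iff_ne_zero]
    intro h0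
    obtain ⟨v, hv, hv0⟩ := Matrix.exists_mulVec_eq_zero_iff.mpr h0
    have hkv := key v
    rw [hv0, dotProduct_zero, mul_zero] at hkv
    have : en v = 0 := by nlinarith [en_nonneg v]
    exact hv (en_eq_zero_iff.mp this)
  -- conclusion
  apply Real.sSup_le _ hC0
  rintro y ⟨x, hx, rfl⟩
  have hx1 : en x = 1 := hx
  show en (Γ0⁻¹.mulVec x) ≤ (1 + α) ^ 2 * K
  have h1 : Γ0.mulVec (Γ0⁻¹.mulVec x) = x := by
    rw [Matrix.mulVec_mulVec, Matrix.mul_nonsing_inv _ hdet, Matrix.one_mulVec]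
  have h2 := key (Γ0⁻¹.mulVec x)
  rw [h1] at h2
  have h3 : Γ0⁻¹.mulVec x ⬝ᵥ x ≤ en (Γ0⁻¹.mulVec x) := by
    have := dot_le_en_mul_en (Γ0⁻¹.mulVec x) x
    rwa [hx1, mul_one] at this
  rcases eq_or_ne (en (Γ0⁻¹.mulVec x)) 0 with h | h
  · rw [h]; exact hC0
  · have hpos : 0 < en (Γ0⁻¹.mulVec x) :=
      lt_of_le_of_ne (en_nonneg _) (Ne.symm h)
    nlinarith [h2, h3, hC0, hpos]
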